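/- Let 0 = r_0 < r_1 < ... < r_n be real numbers with r_1 = 1, and let P(t) = \sum_{k=0}^n H^n_{k,\Lambda}(t) P_k be a Gelfond-B\'ezier curve with control points P_k in \mathbb{R}^s. Then P'(0) = (\prod_{j=2}^n r_j / \prod_{j=2}^n (r_j - 1)) (P_1 - P_0) and P'(1) = r_n (P_n - P_{n-1}). -/

import Mathlib

set_option maxHeartbeats 1000000

open Finset Polynomial in
private lemma KEY9 (s : Finset ℝ) (h2 : 2 ≤ s.card) :
    ∑ a ∈ s, a / ∏ b ∈ s.erase a, (a - b) = if s.card = 2 then 1 else 0 := by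
  have hdeg : (Polynomial.X : ℝ[X]).degree < s.card := by
    rw [Polynomial.degree_X]
    exact_mod_cast (by omega : 1 < s.card)
  have hI := Lagrange.eq_interpolate (v := id) (s := s) Function.injective_id.injOn hdeg
  have hc := congrArg (fun p => Polynomial.coeff p (s.card - 1)) hI
  simp only [Lagrange.interpolate_apply, Polynomial.eval_X, id_eq] at hc
  rw [Polynomial.finset_sum_coeff] at hc
  have hterm : ∀ a ∈ s, Polynomial.coeff (Polynomial.C a * Lagrange.basis s id a) (s.card - 1)
      = a / ∏ b ∈ s.erase a, (a - b) := by
    intro a ha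
    have hbasis : Lagrange.basis s id a
        = Polynomial.C (∏ b ∈ s.erase a, (a - b)⁻¹) *
            ∏ b ∈ s.erase a, (Polynomial.X - Polynomial.C b) := by
      rw [Lagrange.basis]
      simp only [Lagrange.basisDivisor, id_eq]
      rw [Finset.prod_mul_distrib, map_prod]
    have hmon : (∏ b ∈ s.erase a, (Polynomial.X - Polynomial.C b)).Monic :=
      Polynomial.monic_prod_of_monic _ _ (fun b _ => Polynomial.monic_X_sub_C b)
    have hdeg' : (∏ b ∈ s.erase a, (Polynomial.X - Polynomial.C b)).natDegree = s.card - 1 := by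
      rw [Polynomial.natDegree_prod_of_monic _ _ (fun b _ => Polynomial.monic_X_sub_C b)]
      simp [Finset.card_erase_of_mem ha]
    rw [hbasis, ← mul_assoc, ← Polynomial.C_mul]
    rw [Polynomial.coeff_C_mul, ← hdeg', hmon.coeff_natDegree]
    rw [div_eq_mul_inv, ← Finset.prod_inv_distrib]
    ring
  rw [Finset.sum_congr rfl hterm] at hc
  rw [← hc, Polynomial.coeff_X]
  have h12 : (1 = s.card - 1) ↔ (s.card = 2) := by omega
  simp [h12]

/-- The divided difference `[x 0, ..., x n] f` at pairwise distinct points,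
given by the explicit formula `∑ i, f (x i) / ∏_{j ≠ i} (x i - x j)`. -/
noncomputable def divSum (n : ℕ) (x : Fin (n+1) → ℝ) (f : ℝ → ℝ) : ℝ :=
  ∑ i : Fin (n+1), f (x i) / ∏ j ∈ Finset.univ.erase i, (x i - x j)


/-- The Gelfond-Bernstein basis function `H^n_{k,Λ}` associated with the sequence
`Λ = (r 0, ..., r n)`: `H^n_k (t) = (-1)^(n-k) r_{k+1} ⋯ r_n [r_k, ..., r_n] f_t`
for `k ≤ n-1` and `H^n_n (t) = t ^ (r n)`, where `f_t x = t ^ x` (real power). -/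
noncomputable def GB (n : ℕ) (r : Fin (n+1) → ℝ) (k : Fin (n+1)) (t : ℝ) : ℝ :=
  if k.val = n then t ^ (r k)
  else (-1 : ℝ) ^ (n - k.val) * (∏ j ∈ Finset.Ioi k, r j) *
    divSum (n - k.val)
      (fun i => r ⟨k.val + i.val, by have h1 := i.isLt; have h2 := k.isLt; omega⟩)
      (fun x => t ^ x)

/-- The coefficient of `t ^ r i` in `GB n r k t`. -/
noncomputable def cf (n : ℕ) (r : Fin (n+1) → ℝ) (k i : Fin (n+1)) : ℝ :=
  if i ∈ Finset.Icc k (Fin.last n) then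
    (if k = Fin.last n then 1
     else (-1 : ℝ) ^ (n - k.val) * (∏ j ∈ Finset.Ioi k, r j) /
       ∏ j ∈ (Finset.Icc k (Fin.last n)).erase i, (r i - r j))
  else 0

private lemma GB_eq (n : ℕ) (r : Fin (n+1) → ℝ) (k : Fin (n+1)) (t : ℝ) :
    GB n r k t = ∑ i : Fin (n+1), cf n r k i * t ^ (r i) := by
  rcases eq_or_ne k.val n with hk | hk
  · have hkl : k = Fin.last n := Fin.ext (by simpa using hk)
    subst hkl
    rw [GB, if_pos (by simp)]
    rw [Finset.sum_eq_single (Fin.last n)]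
    · rw [cf, if_pos (by simp), if_pos rfl, one_mul]
    · intro b _ hb
      rw [cf, if_neg (by simp only [Finset.Icc_self, Finset.mem_singleton]; exact hb), zero_mul]
    · simp
  · have hklt : k.val < n := lt_of_le_of_ne (Nat.lt_succ_iff.mp k.isLt) hk
    set m := n - k.val with hm
    set e : Fin (m+1) → Fin (n+1) := fun i => ⟨k.val + i.val, by omega⟩ with he
    have hinj : Function.Injective e := by
      intro a b h
      have := congrArg Fin.val h
      simp only [he] at this
      exact Fin.ext (by omega)
    have himg : Finset.univ.image e = Finset.Icc k (Fin.last n) := by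
      ext j
      simp only [Finset.mem_image, Finset.mem_univ, true_and, Finset.mem_Icc, Fin.le_def,
        Fin.val_last, he]
      constructor
      · rintro ⟨i, rfl⟩
        simp only []
        have := i.isLt
        omega
      · rintro ⟨hkj, hjn⟩
        exact ⟨⟨j.val - k.val, by omega⟩, Fin.ext (by simp; omega)⟩
    have hds : divSum m (fun i => r ⟨k.val + i.val, by have := i.isLt; omega⟩) (fun x => t ^ x)
        = ∑ i ∈ Finset.Icc k (Fin.last n),
            t ^ (r i) / ∏ j ∈ (Finset.Icc k (Fin.last n)).erase i, (r i - r j) := by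
      rw [divSum, ← himg, Finset.sum_image (fun a _ b _ h => hinj h)]
      refine Finset.sum_congr rfl (fun i _ => ?_)
      congr 1
      rw [← Finset.image_erase hinj, Finset.prod_image (fun a _ b _ h => hinj h)]
    rw [GB, if_neg hk, hds, Finset.mul_sum]
    rw [← Finset.sum_subset (Finset.subset_univ (Finset.Icc k (Fin.last n)))
      (fun i _ hi => by rw [cf, if_neg hi, zero_mul])]
    refine Finset.sum_congr rfl (fun i hi => ?_)
    rw [cf, if_pos hi, if_neg (by intro h; rw [h] at hklt; simp at hklt)]
    ring



private lemma swap_smul (N : ℕ) {E : Type*} [AddCommGroup E] [Module ℝ E]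
    (g : Fin N → ℝ) (c : Fin N → Fin N → ℝ) (Q : Fin N → E) :
    (∑ i : Fin N, g i • ∑ k : Fin N, c k i • Q k)
      = ∑ k : Fin N, (∑ i : Fin N, g i * c k i) • Q k := by
  simp only [Finset.smul_sum]
  rw [Finset.sum_comm]
  exact Finset.sum_congr rfl fun k _ => by
    rw [Finset.sum_smul]
    exact Finset.sum_congr rfl fun i _ => (mul_smul _ _ _).symm

private lemma sum_smul_ite (N : ℕ) {E : Type*} [AddCommGroup E] [Module ℝ E]
    (a b : Fin N) (hab : a ≠ b) (c : ℝ) (w : Fin N → ℝ)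
    (hw : ∀ k, w k = if k = a then c else if k = b then -c else 0) (Q : Fin N → E) :
    ∑ k : Fin N, w k • Q k = c • (Q a - Q b) := by
  have hterm : ∀ k : Fin N, w k • Q k
      = (if k = a then c else 0) • Q k + (if k = b then -c else 0) • Q k := by
    intro k
    by_cases h1 : k = a
    · subst h1
      simp [hw, hab]
    · by_cases h2 : k = b
      · subst h2
        simp [hw, h1]
      · simp [hw, h1, h2]
  rw [Finset.sum_congr rfl (fun k _ => hterm k), Finset.sum_add_distrib]
  rw [Finset.sum_eq_single a (fun k _ hk => by rw [if_neg hk, zero_smul])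
      (fun h => absurd (Finset.mem_univ a) h),
    Finset.sum_eq_single b (fun k _ hk => by rw [if_neg hk, zero_smul])
      (fun h => absurd (Finset.mem_univ b) h),
    if_pos rfl, if_pos rfl, smul_sub, neg_smul, sub_eq_add_neg]

private lemma hw_lemma (n : ℕ) (hn : 1 ≤ n) (r : Fin (n+1) → ℝ) (hr : StrictMono r)
    (k : Fin (n+1)) :
    (∑ i : Fin (n+1), r i * cf n r k i)
      = if k = Fin.last n then r (Fin.last n)
        else if k = (⟨n-1, by have := hn; omega⟩ : Fin (n+1)) then -(r (Fin.last n)) else 0 := by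
  have hinjr := hr.injective
  rcases eq_or_ne k (Fin.last n) with rfl | hk
  · rw [if_pos rfl]
    rw [Finset.sum_eq_single (Fin.last n)]
    · rw [cf, if_pos (by simp), if_pos rfl, mul_one]
    · intro b _ hb
      rw [cf, if_neg (by simp only [Finset.Icc_self, Finset.mem_singleton]; exact hb), mul_zero]
    · simp
  · have hklt : k.val < n :=
      lt_of_le_of_ne (Nat.lt_succ_iff.mp k.isLt) (fun h => hk (Fin.ext (by simp [h])))
    rw [if_neg hk]
    have hterm : ∀ i : Fin (n+1), r i * cf n r k i
        = if i ∈ Finset.Icc k (Fin.last n) then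
            ((-1:ℝ)^(n - k.val) * ∏ j ∈ Finset.Ioi k, r j) *
              (r i / ∏ j ∈ (Finset.Icc k (Fin.last n)).erase i, (r i - r j))
          else 0 := by
      intro i
      rw [cf, if_neg hk]
      split_ifs with h
      · ring
      · ring
    rw [Finset.sum_congr rfl (fun i _ => hterm i), Finset.sum_ite_mem, Finset.univ_inter,
      ← Finset.mul_sum]
    have himg2 : ∑ i ∈ Finset.Icc k (Fin.last n),
          r i / ∏ j ∈ (Finset.Icc k (Fin.last n)).erase i, (r i - r j)
        = ∑ a ∈ (Finset.Icc k (Fin.last n)).image r,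
            a / ∏ b ∈ ((Finset.Icc k (Fin.last n)).image r).erase a, (a - b) := by
      rw [Finset.sum_image (fun a _ b _ h => hinjr h)]
      refine Finset.sum_congr rfl fun i _ => ?_
      rw [← Finset.image_erase hinjr, Finset.prod_image (fun a _ b _ h => hinjr h)]
    have hcard : ((Finset.Icc k (Fin.last n)).image r).card = n + 1 - k.val := by
      rw [Finset.card_image_of_injective _ hinjr, Fin.card_Icc]
      simp
    rw [himg2, KEY9 _ (by rw [hcard]; omega), hcard]
    rcases eq_or_ne k.val (n-1) with hk1 | hk1
    · rw [if_pos (by omega), if_pos (Fin.ext (by simp [hk1]))]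
      have hIoiK : Finset.Ioi k = {Fin.last n} := by
        ext j
        simp only [Finset.mem_Ioi, Finset.mem_singleton, Fin.lt_def, Fin.ext_iff, Fin.val_last]
        have := j.isLt
        omega
      rw [hIoiK, Finset.prod_singleton, show n - k.val = 1 by omega, pow_one, mul_one]
      ring
    · rw [if_neg (by omega), if_neg (fun h => hk1 (by rw [h])), mul_zero]

/-- Endpoint derivatives of a Gelfond-Bezier curve when r 1 = 1: the curve is
tangent to the control polygon at both endpoints, with the stated factors. -/
theorem stmt9 (n : ℕ) (hn : 1 ≤ n) (s : ℕ) (r : Fin (n+1) → ℝ) (hr : StrictMono r)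
    (h0 : r 0 = 0) (h1 : r ⟨1, by omega⟩ = 1) (Q : Fin (n+1) → EuclideanSpace ℝ (Fin s)) :
    HasDerivWithinAt (fun t : ℝ => ∑ k : Fin (n+1), GB n r k t • Q k)
      (((∏ j ∈ Finset.Ioi (⟨1, by omega⟩ : Fin (n+1)), r j) /
          (∏ j ∈ Finset.Ioi (⟨1, by omega⟩ : Fin (n+1)), (r j - 1))) •
        (Q ⟨1, by omega⟩ - Q 0))
      (Set.Icc 0 1) 0
    ∧ HasDerivWithinAt (fun t : ℝ => ∑ k : Fin (n+1), GB n r k t • Q k)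
        ((r (Fin.last n)) • (Q (Fin.last n) - Q ⟨n - 1, by omega⟩))
        (Set.Icc 0 1) 1 := by
  have hinjr := hr.injective
  set one : Fin (n+1) := ⟨1, by omega⟩ with hone_def
  set V : Fin (n+1) → EuclideanSpace ℝ (Fin s) :=
    fun i => ∑ k : Fin (n+1), cf n r k i • Q k with hV
  have hF : (fun t : ℝ => ∑ k : Fin (n+1), GB n r k t • Q k)
      = fun t : ℝ => ∑ i : Fin (n+1), t ^ (r i) • V i := by
    funext t
    simp only [GB_eq, Finset.sum_smul]
    rw [Finset.sum_comm]
    simp only [hV, Finset.smul_sum]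
    exact Finset.sum_congr rfl fun i _ => Finset.sum_congr rfl fun k _ => by
      rw [mul_comm, mul_smul]
  -- derivative at 0
  have hd0 : ∀ i : Fin (n+1), HasDerivWithinAt (fun t : ℝ => t ^ (r i) • V i)
      ((if i.val = 1 then (1:ℝ) else 0) • V i) (Set.Icc 0 1) 0 := by
    intro i
    rcases Nat.eq_zero_or_pos i.val with hi0 | hip
    · have hi : i = 0 := Fin.ext (by simpa using hi0)
      subst hi
      rw [if_neg (by simp), zero_smul]
      have hfun : (fun t : ℝ => t ^ (r 0) • V 0) = fun _ => V 0 := by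
        funext t; rw [h0, Real.rpow_zero, one_smul]
      rw [hfun]
      exact hasDerivWithinAt_const _ _ _
    · have h1le : (1:ℝ) ≤ r i := by
        have hle : one ≤ i := by rw [Fin.le_def]; show 1 ≤ i.val; omega
        calc (1:ℝ) = r one := h1.symm
        _ ≤ r i := hr.monotone hle
      have hda := ((Real.hasDerivAt_rpow_const (x := (0:ℝ)) (p := r i)
        (Or.inr h1le)).hasDerivWithinAt (s := Set.Icc (0:ℝ) 1)).smul_const (V i)
      have hcoef : r i * (0:ℝ) ^ (r i - 1) = (if i.val = 1 then (1:ℝ) else 0) := by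
        rcases eq_or_ne i.val 1 with h | h
        · have hi : i = one := Fin.ext (by simpa using h)
          rw [if_pos h, hi, h1]
          norm_num
        · have hgt : (1:ℝ) < r i := by
            have hlt : one < i := by rw [Fin.lt_def]; simp only [hone_def]; omega
            calc (1:ℝ) = r one := h1.symm
            _ < r i := hr hlt
          rw [if_neg h, Real.zero_rpow (by linarith), mul_zero]
      rw [← hcoef]
      exact hda
  have key0 : HasDerivWithinAt (fun t : ℝ => ∑ i : Fin (n+1), t ^ (r i) • V i)
      (V one) (Set.Icc 0 1) 0 := by
    have hsum := HasDerivWithinAt.fun_sum (fun i (_ : i ∈ Finset.univ) => hd0 i)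
    have hval : (∑ i : Fin (n+1), (if i.val = 1 then (1:ℝ) else 0) • V i) = V one := by
      rw [Finset.sum_eq_single one]
      · rw [if_pos rfl, one_smul]
      · intro b _ hb
        rw [if_neg (fun hc => hb (Fin.ext (by simpa using hc))), zero_smul]
      · simp
    rw [hval] at hsum
    exact hsum
  -- derivative at 1
  have key1 : HasDerivWithinAt (fun t : ℝ => ∑ i : Fin (n+1), t ^ (r i) • V i)
      (∑ i : Fin (n+1), r i • V i) (Set.Icc 0 1) 1 := by
    refine HasDerivWithinAt.fun_sum (fun i _ => ?_)
    have hda := ((Real.hasDerivAt_rpow_const (x := (1:ℝ)) (p := r i)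
      (Or.inl one_ne_zero)).hasDerivWithinAt (s := Set.Icc (0:ℝ) 1)).smul_const (V i)
    simpa [Real.one_rpow] using hda
  -- scalar facts
  have hone_ne_last_of : one.val = 1 := rfl
  have hSpos : 0 < ∏ j ∈ Finset.Ioi one, (r j - 1) := by
    refine Finset.prod_pos (fun j hj => sub_pos.mpr ?_)
    calc (1:ℝ) = r one := h1.symm
    _ < r j := hr (Finset.mem_Ioi.mp hj)
  have hSne : (∏ j ∈ Finset.Ioi one, (r j - 1)) ≠ 0 := ne_of_gt hSpos
  have hcardIoi : (Finset.Ioi one).card = n - 1 := by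
    rw [Fin.card_Ioi]
    show n + 1 - 1 - 1 = n - 1
    omega
  have hF4 : ∏ j ∈ Finset.Ioi one, (1 - r j)
      = (-1:ℝ)^(n-1) * ∏ j ∈ Finset.Ioi one, (r j - 1) := by
    rw [← hcardIoi, ← Finset.prod_const (-1:ℝ), ← Finset.prod_mul_distrib]
    exact Finset.prod_congr rfl (fun j _ => by ring)
  set R := ∏ j ∈ Finset.Ioi one, r j with hRdef
  set S := ∏ j ∈ Finset.Ioi one, (r j - 1) with hSdef
  have hm1 : ((-1:ℝ))^(n-1) ≠ 0 := pow_ne_zero _ (by norm_num)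
  have hpow : ((-1:ℝ))^n = (-1:ℝ)^(n-1) * (-1) := by
    have h' : n - 1 + 1 = n := by omega
    rw [← h', pow_succ]
    simp
  -- cf values at i = one
  have hIcc0 : Finset.Icc (0 : Fin (n+1)) (Fin.last n) = Finset.univ := by
    ext j; simp [Fin.zero_le, Fin.le_last]
  have hErase0 : (Finset.Icc (0 : Fin (n+1)) (Fin.last n)).erase one
      = insert 0 (Finset.Ioi one) := by
    rw [hIcc0]
    ext j
    simp only [Finset.mem_erase, Finset.mem_univ, and_true, Finset.mem_insert, Finset.mem_Ioi,
      Fin.lt_def, Fin.ext_iff, hone_def, Fin.val_zero]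
    omega
  have hIoi0 : Finset.Ioi (0 : Fin (n+1)) = insert one (Finset.Ioi one) := by
    ext j
    simp only [Finset.mem_Ioi, Finset.mem_insert, Fin.lt_def, Fin.ext_iff, hone_def,
      Fin.val_zero]
    omega
  have h0ne : (0 : Fin (n+1)) ∉ Finset.Ioi one := by
    simp [Fin.lt_def, hone_def]
  have hcf0 : cf n r 0 one = -(R/S) := by
    rw [cf, if_pos (by simp [Fin.zero_le, Fin.le_last]),
      if_neg (by intro h; have := congrArg Fin.val h; simp at this; omega)]
    rw [hErase0, Finset.prod_insert h0ne, hIoi0,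
      Finset.prod_insert (Finset.notMem_Ioi_self), h1, h0]
    rw [hF4]
    simp only [Fin.val_zero, Nat.sub_zero]
    rw [hpow]
    field_simp
    ring
  have hcf11 : cf n r one one = R/S := by
    rw [cf, if_pos (by simp [Fin.le_last])]
    rcases eq_or_ne one (Fin.last n) with hl | hl
    · rw [if_pos hl]
      have hn1 : n = 1 := by
        have := congrArg Fin.val hl
        simp only [hone_def, Fin.val_last] at this
        omega
      have hIoiEmpty : Finset.Ioi one = ∅ := by
        ext j
        simp only [Finset.mem_Ioi, Finset.notMem_empty, iff_false, not_lt]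
        rw [hl]
        exact Fin.le_last j
      rw [hRdef, hSdef, hIoiEmpty]
      simp
    · rw [if_neg hl]
      have hErase1 : (Finset.Icc one (Fin.last n)).erase one = Finset.Ioi one := by
        ext j
        simp only [Finset.mem_erase, Finset.mem_Icc, Finset.mem_Ioi, Fin.le_def, Fin.lt_def,
          Fin.ext_iff, Fin.val_last, hone_def]
        have := j.isLt
        omega
      rw [hErase1, h1, hF4, show n - (one : Fin (n+1)).val = n - 1 from rfl]
      rw [hRdef]
      field_simp
  have hcf_other : ∀ k : Fin (n+1), k ≠ 0 → k ≠ one → cf n r k one = 0 := by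
    intro k hk0 hk1
    rw [cf, if_neg]
    intro hmem
    rw [Finset.mem_Icc] at hmem
    have hle : k.val ≤ 1 := hmem.1
    rcases Nat.lt_or_ge k.val 1 with h | h
    · exact hk0 (Fin.ext (by simp only [Fin.val_zero]; omega))
    · exact hk1 (Fin.ext (by simp only [hone_def]; omega))
  have hone_ne_zero : one ≠ 0 := by
    intro h
    have := congrArg Fin.val h
    simp [hone_def] at this
  have hcfval : ∀ k : Fin (n+1), cf n r k one
      = if k = one then R/S else if k = 0 then -(R/S) else 0 := by
    intro k
    rcases eq_or_ne k one with rfl | hk1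
    · rw [if_pos rfl, hcf11]
    · rcases eq_or_ne k 0 with rfl | hk0
      · rw [if_neg hk1, if_pos rfl, hcf0]
      · rw [if_neg hk1, if_neg hk0, hcf_other k hk0 hk1]
  have hV1 : V one = (R/S) • (Q one - Q 0) :=
    sum_smul_ite (n+1) one 0 hone_ne_zero (R/S) _ hcfval Q
  -- the sum ∑ i, r i • V i
  have hlast_ne : (Fin.last n) ≠ (⟨n-1, by omega⟩ : Fin (n+1)) := by
    intro h
    have := congrArg Fin.val h
    simp only [Fin.val_last] at this
    omega
  have hw := hw_lemma n hn r hr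
  have hVsum : (∑ i : Fin (n+1), r i • V i)
      = r (Fin.last n) • (Q (Fin.last n) - Q ⟨n-1, by omega⟩) :=
    (swap_smul (n+1) r (cf n r) Q).trans
      (sum_smul_ite (n+1) (Fin.last n) ⟨n-1, by omega⟩ hlast_ne (r (Fin.last n))
        _ hw Q)
  constructor
  · rw [hF, ← hV1]
    exact key0
  · rw [hF, ← hVsum]
    exact key1
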